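/- Let C be a directed category, J a Grothendieck topology on C^op, and D an ideal of C (an upward-closed full subcategory). Then the restriction J_D, defined by J_D(x) = {S ∩ D(x,−) : S ∈ J(x)} for x in D, is a Grothendieck topology on D^op. Moreover every Grothendieck topology on D^op arises as such a restriction. -/

import Mathlib

open CategoryTheory


namespace RestrIdealAux

variable {C : Type u} [SmallCategory C] (P : C → Prop)
  (hideal : ∀ {x y : C}, P x → (y ⟶ x) → P y)

def liftSieve {x : C} (hx : P x) (T : Sieve (⟨x, hx⟩ : ObjectProperty.FullSubcategory P)) : Sieve x where
  arrows y f := T.arrows (Y := ⟨y, hideal hx f⟩) (ObjectProperty.homMk f)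
  downward_closed := fun {y z f} hf g =>
    T.downward_closed (Y := ⟨y, hideal hx f⟩) (Z := ⟨z, hideal hx (g ≫ f)⟩) hf (ObjectProperty.homMk g)

lemma functorPullback_liftSieve {x : C} (hx : P x)
    (T : Sieve (⟨x, hx⟩ : ObjectProperty.FullSubcategory P)) :
    Sieve.functorPullback (ObjectProperty.ι P) (X := ⟨x, hx⟩)
      (liftSieve P hideal hx T) = T := by
  ext Y f; exact Iff.rfl

lemma liftSieve_functorPullback {x : C} (hx : P x) (S : Sieve x) :
    liftSieve P hideal hx (Sieve.functorPullback (ObjectProperty.ι P)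
      (X := ⟨x, hx⟩) S) = S := by
  ext y f; exact Iff.rfl

lemma liftSieve_pullback {x : C} (hx : P x) (T : Sieve (⟨x, hx⟩ : ObjectProperty.FullSubcategory P))
    {y : C} (f : y ⟶ x) (hy : P y) :
    (liftSieve P hideal hx T).pullback f
      = liftSieve P hideal hy (T.pullback (Y := ⟨y, hy⟩) (ObjectProperty.homMk f)) := by
  ext z g; exact Iff.rfl

/-- The restriction of `J` to the ideal. -/
def restrict (J : GrothendieckTopology C) : GrothendieckTopology (ObjectProperty.FullSubcategory P) where
  sieves X := {T | ∃ S ∈ J X.obj, T = Sieve.functorPullback (ObjectProperty.ι P) S}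
  top_mem' X := ⟨⊤, J.top_mem _, by ext Y f; simp [Sieve.functorPullback]⟩
  pullback_stable' X Y T f hT := by
    obtain ⟨S, hS, rfl⟩ := hT
    exact ⟨S.pullback f.hom, J.pullback_stable _ hS, rfl⟩
  transitive' X T hT R h := by
    obtain ⟨S, hS, rfl⟩ := hT
    refine ⟨liftSieve P hideal X.property R, ?_,
      (functorPullback_liftSieve P hideal X.property R).symm⟩
    refine J.transitive hS _ ?_
    intro y f hf
    obtain ⟨S'', hS'', hR⟩ := h (Y := ⟨y, hideal X.property f⟩) (f := ObjectProperty.homMk f) hf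
    rw [liftSieve_pullback P hideal X.property R f (hideal X.property f), hR,
      liftSieve_functorPullback]
    exact hS''

/-- The extension of a topology `K` on the ideal to all of `C`. -/
def extend (K : GrothendieckTopology (ObjectProperty.FullSubcategory P)) : GrothendieckTopology C where
  sieves x := {S | ∀ ⦃y : C⦄ (f : y ⟶ x) (hy : P y),
    Sieve.functorPullback (ObjectProperty.ι P) (X := ⟨y, hy⟩) (S.pullback f) ∈ K ⟨y, hy⟩}
  top_mem' x y f hy := by
    have : Sieve.functorPullback (ObjectProperty.ι P) (X := (⟨y, hy⟩ : ObjectProperty.FullSubcategory P))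
        ((⊤ : Sieve x).pullback f) = ⊤ := by ext z g; simp [Sieve.functorPullback]
    rw [this]; exact K.top_mem _
  pullback_stable' x y S f hS z g hz := by
    rw [← Sieve.pullback_comp]
    exact hS (g ≫ f) hz
  transitive' x S hS R h y f hy := by
    refine K.transitive (hS f hy) _ ?_
    intro z g hg
    have hg' : S ((ObjectProperty.ι P).map g ≫ f) := hg
    have := h hg' (𝟙 z.obj) z.property
    convert this using 1
    ext w h'
    have key : ∀ (a : w.obj ⟶ z.obj) (b : z.obj ⟶ y),
        R.arrows ((a ≫ b) ≫ f) ↔ R.arrows ((a ≫ 𝟙 z.obj) ≫ b ≫ f) := by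
      intro a b
      rw [Category.comp_id, Category.assoc]
    exact key h'.hom g.hom

end RestrIdealAux

/-- Let `C` be a directed category (Lean convention: `C` is the opposite of the paper's
category, so Mathlib sieves correspond to the paper's sieves on `C^op`), `J` a
Grothendieck topology on it, and `D` an ideal of the paper's category, i.e. a full
subcategory, given by a predicate `P`, which is upward closed with respect to the
paper's morphisms (in Lean: if `P x` and there is a morphism `y ⟶ x`, then `P y`).
Then the restriction `J_D`, whose covering sieves on an object of `D` are exactly the
restrictions `S ∩ D(x,−)` of covering sieves `S ∈ J x`, is a Grothendieck topology on
`D`.  Moreover every Grothendieck topology on `D` arises as such a restriction. -/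
theorem restriction_to_ideal_is_topology
    {C : Type u} [SmallCategory C]
    (hdir : ∀ x y : C, Nonempty (x ⟶ y) → Nonempty (y ⟶ x) → x = y)
    (P : C → Prop)
    (hideal : ∀ {x y : C}, P x → (y ⟶ x) → P y)
    (J : GrothendieckTopology C) :
    (∃ JD : GrothendieckTopology (ObjectProperty.FullSubcategory P),
      ∀ (X : ObjectProperty.FullSubcategory P) (T : Sieve X),
        T ∈ JD X ↔ ∃ S ∈ J X.obj,
          T = Sieve.functorPullback (ObjectProperty.ι P) S) ∧
    (∀ K : GrothendieckTopology (ObjectProperty.FullSubcategory P),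
      ∃ J' : GrothendieckTopology C,
        ∀ (X : ObjectProperty.FullSubcategory P) (T : Sieve X),
          T ∈ K X ↔ ∃ S ∈ J' X.obj,
            T = Sieve.functorPullback (ObjectProperty.ι P) S) := by
  constructor
  · refine ⟨RestrIdealAux.restrict P hideal J, ?_⟩
    intro X T
    exact Iff.rfl
  · intro K
    refine ⟨RestrIdealAux.extend P K, ?_⟩
    intro X T
    constructor
    · intro hT
      refine ⟨RestrIdealAux.liftSieve P hideal X.property T, ?_, ?_⟩
      · intro y g hy
        rw [RestrIdealAux.liftSieve_pullback P hideal X.property T g hy,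
          RestrIdealAux.functorPullback_liftSieve]
        exact K.pullback_stable (Y := ⟨y, hy⟩) (ObjectProperty.homMk g) hT
      · exact (RestrIdealAux.functorPullback_liftSieve P hideal X.property T).symm
    · rintro ⟨S, hS, rfl⟩
      have := hS (𝟙 X.obj) X.property
      rwa [Sieve.pullback_id] at this
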